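/- Let 1 ≤ i < n and assume that the ideal (f_i, f_{i+1}) of S equals the maximal ideal m. Then the R-linear map a : S_{i+1} ⊕ S_{i−1} → S_i, a(s,t) = −π(s) + f_i·t, is right almost split in add(⊕_{j=1}^n S_j): every R-linear map h : S_j → S_i (for any 1 ≤ j ≤ n) that is not a split epimorphism factors through a. -/

import Mathlib

set_option synthInstance.maxHeartbeats 1000000
set_option maxHeartbeats 1000000

/-- `S = k[[x,y]]`, the formal power series ring in two variables. -/
abbrev PSring (k : Type) [Field k] : Type := MvPowerSeries (Fin 2) k

/-- The maximal ideal `m = (x, y)` of `k[[x,y]]`. -/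
noncomputable abbrev mxy (k : Type) [Field k] : Ideal (PSring k) :=
  Ideal.span {MvPowerSeries.X 0, MvPowerSeries.X 1}

/-- `R = S/(f₁ ⋯ f_n)`. -/
abbrev Rring (k : Type) [Field k] (n : ℕ) (f : ℕ → PSring k) : Type :=
  PSring k ⧸ Ideal.span {∏ j ∈ Finset.range n, f j}

/-- The canonical projection `S → R`. -/
noncomputable abbrev toR (k : Type) [Field k] (n : ℕ) (f : ℕ → PSring k) :
    PSring k →+* Rring k n f :=
  Ideal.Quotient.mk (Ideal.span {∏ j ∈ Finset.range n, f j})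

/-- For `a ∈ S`, the `R`-module `R/(ā)`, which is `S/(a)` when `f₁⋯f_n ∈ (a)`. -/
abbrev Qmod (k : Type) [Field k] (n : ℕ) (f : ℕ → PSring k) (a : PSring k) : Type :=
  Rring k n f ⧸ Ideal.span {toR k n f a}

/-- The class in `S/(a)` of an element `r : R`. -/
noncomputable abbrev qmk (k : Type) [Field k] (n : ℕ) (f : ℕ → PSring k)
    (a : PSring k) (r : Rring k n f) : Qmod k n f a :=
  Ideal.Quotient.mk (Ideal.span {toR k n f a}) r

/-- `Sᵢ = S/(f₁ ⋯ fᵢ)` as an `R`-module (1-based index `i`;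
in the 0-based function `f`, the mathematical `fᵢ` is `f (i-1)`). -/
abbrev Smod (k : Type) [Field k] (n : ℕ) (f : ℕ → PSring k) (i : ℕ) : Type :=
  Qmod k n f (∏ j ∈ Finset.range i, f j)

/-- Multiplication by `c` as an `R`-linear map `S/(a) → S/(b)`, given `b ∣ c * a`. -/
noncomputable def mulQ (k : Type) [Field k] (n : ℕ) (f : ℕ → PSring k)
    (a b c : PSring k) (hd : b ∣ c * a) :
    Qmod k n f a →ₗ[Rring k n f] Qmod k n f b :=
  Submodule.liftQ _
    ((Ideal.span {toR k n f b}).mkQ ∘ₗ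
      LinearMap.lsmul (Rring k n f) (Rring k n f) (toR k n f c))
    (by
      rw [Ideal.span_le]
      rintro x hx
      simp only [Set.mem_singleton_iff] at hx
      subst hx
      simp only [SetLike.mem_coe, LinearMap.mem_ker, LinearMap.comp_apply,
        LinearMap.lsmul_apply, Submodule.mkQ_apply, smul_eq_mul]
      rw [Submodule.Quotient.mk_eq_zero]
      obtain ⟨d, hd⟩ := hd
      exact Ideal.mem_span_singleton'.mpr
        ⟨toR k n f d, by rw [← map_mul, ← map_mul, mul_comm d, ← hd]⟩)

lemma mulQ_apply (k : Type) [Field k] (n : ℕ) (f : ℕ → PSring k)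
    (a b c : PSring k) (hd : b ∣ c * a) (r : Rring k n f) :
    mulQ k n f a b c hd (qmk k n f a r) = qmk k n f b (toR k n f c * r) := rfl

lemma constCoeff_zero_mem_mxy (k : Type) [Field k] {φ : PSring k}
    (h : MvPowerSeries.constantCoeff (σ := Fin 2) (R := k) φ = 0) : φ ∈ mxy k := by
  classical
  set ψ : PSring k := fun m => if m 0 = 0 then MvPowerSeries.coeff m φ else 0 with hψ
  have h1 : (MvPowerSeries.X 0 : PSring k) ∣ φ - ψ := by
    rw [MvPowerSeries.X_dvd_iff]
    intro m hm
    have : MvPowerSeries.coeff m ψ = MvPowerSeries.coeff m φ := by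
      rw [hψ]; exact if_pos hm
    rw [map_sub, this, sub_self]
  have h2 : (MvPowerSeries.X 1 : PSring k) ∣ ψ := by
    rw [MvPowerSeries.X_dvd_iff]
    intro m hm
    rw [MvPowerSeries.coeff_apply]
    simp only [hψ]
    split_ifs with h0
    · have hm0 : m = 0 := by
        ext t
        fin_cases t
        · exact h0
        · exact hm
      rw [hm0]
      simpa [MvPowerSeries.coeff_zero_eq_constantCoeff] using h
    · rfl
  obtain ⟨u, hu⟩ := h1
  obtain ⟨v, hv⟩ := h2
  exact Ideal.mem_span_pair.mpr ⟨u, v, by rw [mul_comm u, mul_comm v, ← hu, ← hv]; ring⟩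

lemma smul_qmk (k : Type) [Field k] (n : ℕ) (f : ℕ → PSring k)
    (a : PSring k) (r s : Rring k n f) :
    r • qmk k n f a s = qmk k n f a (r * s) := rfl

lemma dvd_of_toR_mem (k : Type) [Field k] (n : ℕ) (f : ℕ → PSring k)
    {b x : PSring k} (hb : b ∣ ∏ j ∈ Finset.range n, f j)
    (hx : toR k n f x ∈ Ideal.span {toR k n f b}) : b ∣ x := by
  obtain ⟨d, hd⟩ := Ideal.mem_span_singleton'.mp hx
  obtain ⟨e, rfl⟩ := Ideal.Quotient.mk_surjective d
  have hz : x - e * b ∈ Ideal.span {∏ j ∈ Finset.range n, f j} := by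
    rw [← Ideal.Quotient.eq_zero_iff_mem, map_sub, map_mul]
    rw [hd]
    exact sub_self _
  obtain ⟨w, hw⟩ := Ideal.mem_span_singleton'.mp hz
  have hx' : x = e * b + w * (∏ j ∈ Finset.range n, f j) := by rw [hw]; ring
  rw [hx']
  exact dvd_add (Dvd.intro_left e rfl) (Dvd.dvd.mul_left hb w)

theorem statement5 (k : Type) [Field k] [Infinite k]
    (n : ℕ) (hn : 1 ≤ n) (f : ℕ → PSring k)
    (hmem : ∀ i < n, f i ∈ mxy k)
    (hirr : ∀ i < n, Irreducible (f i))
    (hdist : ∀ i < n, ∀ j < n, i ≠ j →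
      (Ideal.span {f i} : Ideal (PSring k)) ≠ Ideal.span {f j})
    (i : ℕ) (hi1 : 1 ≤ i) (hi2 : i < n)
    (hmax : (Ideal.span {f (i - 1), f i} : Ideal (PSring k)) = mxy k) :
    ∀ a : Smod k n f (i + 1) × Smod k n f (i - 1) →ₗ[Rring k n f] Smod k n f i,
      (∀ r r' : Rring k n f,
        a (qmk k n f (∏ j ∈ Finset.range (i + 1), f j) r,
           qmk k n f (∏ j ∈ Finset.range (i - 1), f j) r') =
          - qmk k n f (∏ j ∈ Finset.range i, f j) r +
          qmk k n f (∏ j ∈ Finset.range i, f j) (toR k n f (f (i - 1)) * r')) →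
      ∀ jdx : ℕ, 1 ≤ jdx → jdx ≤ n →
        ∀ h : Smod k n f jdx →ₗ[Rring k n f] Smod k n f i,
          (¬ ∃ σ : Smod k n f i →ₗ[Rring k n f] Smod k n f jdx,
              h ∘ₗ σ = LinearMap.id) →
          ∃ g : Smod k n f jdx →ₗ[Rring k n f]
              Smod k n f (i + 1) × Smod k n f (i - 1),
            a ∘ₗ g = h := by
  intro a ha jdx hj1 hjn h hns
  classical
  have hsub : i - 1 + 1 = i := by omega
  have hFi : (∏ j ∈ Finset.range i, f j)
      = (∏ j ∈ Finset.range (i-1), f j) * f (i-1) := by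
    conv_lhs => rw [← hsub]
    rw [Finset.prod_range_succ]
  have hfne : ∀ l, l < n → f l ≠ 0 := fun l hl => (hirr l hl).ne_zero
  have hFne : ∀ m, m ≤ n → (∏ j ∈ Finset.range m, f j) ≠ 0 := by
    intro m hm
    rw [Finset.prod_ne_zero_iff]
    exact fun l hl => hfne l (lt_of_lt_of_le (Finset.mem_range.mp hl) hm)
  -- extract the multiplier g₀
  obtain ⟨r0, hr0⟩ := Ideal.Quotient.mk_surjective
    (h (qmk k n f (∏ j ∈ Finset.range jdx, f j) 1))
  obtain ⟨g₀, hg₀⟩ := Ideal.Quotient.mk_surjective r0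
  have hchar : ∀ r : Rring k n f, h (qmk k n f (∏ j ∈ Finset.range jdx, f j) r)
      = qmk k n f (∏ j ∈ Finset.range i, f j) (r * toR k n f g₀) := by
    intro r
    have e1 : qmk k n f (∏ j ∈ Finset.range jdx, f j) r
        = r • qmk k n f (∏ j ∈ Finset.range jdx, f j) 1 := by
      rw [smul_qmk, mul_one]
    rw [e1, map_smul, ← hr0, ← hg₀, smul_qmk]
  -- annihilator condition
  have ann : (∏ j ∈ Finset.range i, f j) ∣ (∏ j ∈ Finset.range jdx, f j) * g₀ := by
    have h0 : qmk k n f (∏ j ∈ Finset.range jdx, f j)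
        (toR k n f (∏ j ∈ Finset.range jdx, f j)) = 0 := by
      rw [Ideal.Quotient.eq_zero_iff_mem]
      exact Ideal.mem_span_singleton_self _
    have h1 := hchar (toR k n f (∏ j ∈ Finset.range jdx, f j))
    rw [h0, map_zero] at h1
    refine dvd_of_toR_mem k n f
      ⟨∏ l ∈ Finset.Ico i n, f l, (Finset.prod_range_mul_prod_Ico f hi2.le).symm⟩ ?_
    rw [← Ideal.Quotient.eq_zero_iff_mem, map_mul]
    exact h1.symm
  -- reduce to finding suitable c1, c2
  suffices key : ∃ c1 c2 : PSring k,
      ((∏ j ∈ Finset.range (i+1), f j) ∣ c1 * (∏ j ∈ Finset.range jdx, f j)) ∧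
      ((∏ j ∈ Finset.range (i-1), f j) ∣ c2 * (∏ j ∈ Finset.range jdx, f j)) ∧
      ((∏ j ∈ Finset.range i, f j) ∣ (f (i-1) * c2 - c1 - g₀)) by
    obtain ⟨c1, c2, hd1, hd2, hk⟩ := key
    refine ⟨LinearMap.prod
      (mulQ k n f (∏ j ∈ Finset.range jdx, f j) (∏ j ∈ Finset.range (i+1), f j) c1 hd1)
      (mulQ k n f (∏ j ∈ Finset.range jdx, f j) (∏ j ∈ Finset.range (i-1), f j) c2 hd2), ?_⟩
    apply LinearMap.ext
    intro x
    obtain ⟨r, rfl⟩ := Ideal.Quotient.mk_surjective x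
    rw [LinearMap.comp_apply, LinearMap.prod_apply, Function.prod, mulQ_apply, mulQ_apply, ha,
      hchar r]
    rw [← map_neg, ← map_add, Ideal.Quotient.eq]
    obtain ⟨w, hw⟩ := hk
    refine Ideal.mem_span_singleton'.mpr ⟨toR k n f w * r, ?_⟩
    have hw' := congrArg (toR k n f) hw
    rw [map_sub, map_sub, map_mul, map_mul] at hw'
    linear_combination (-r) * hw'
  rcases lt_trichotomy jdx i with hlt | heq | hgt
  · -- jdx < i
    have hij : jdx ≤ i - 1 := by omega
    obtain ⟨t, ht⟩ := ann
    have hg : g₀ = (∏ l ∈ Finset.Ico jdx i, f l) * t := by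
      apply mul_left_cancel₀ (hFne jdx hjn)
      rw [ht]
      conv_lhs => rw [← Finset.prod_range_mul_prod_Ico f hlt.le]
      ring
    refine ⟨0, (∏ l ∈ Finset.Ico jdx (i-1), f l) * t, ?_, ?_, ?_⟩
    · rw [zero_mul]; exact dvd_zero _
    · refine ⟨t, ?_⟩
      conv_rhs => rw [← Finset.prod_range_mul_prod_Ico f hij]
      ring
    · have htop : (∏ l ∈ Finset.Ico jdx i, f l)
          = (∏ l ∈ Finset.Ico jdx (i-1), f l) * f (i-1) := by
        conv_lhs => rw [← hsub]
        rw [Finset.prod_Ico_succ_top hij]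
      refine ⟨0, ?_⟩
      rw [hg, htop]
      ring
  · -- jdx = i
    subst heq
    by_cases hu : IsUnit g₀
    · exfalso
      apply hns
      obtain ⟨ν, hν⟩ := hu
      refine ⟨mulQ k n f (∏ j ∈ Finset.range jdx, f j) (∏ j ∈ Finset.range jdx, f j)
        (↑ν⁻¹) ⟨↑ν⁻¹, mul_comm _ _⟩, ?_⟩
      apply LinearMap.ext
      intro x
      obtain ⟨r, rfl⟩ := Ideal.Quotient.mk_surjective x
      rw [LinearMap.comp_apply, mulQ_apply, hchar, LinearMap.id_apply]
      have hone : toR k n f (↑ν⁻¹) * toR k n f g₀ = 1 := by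
        rw [← map_mul, ← hν, Units.inv_mul, map_one]
      have : toR k n f (↑ν⁻¹) * r * toR k n f g₀ = r := by
        calc toR k n f (↑ν⁻¹) * r * toR k n f g₀
            = (toR k n f (↑ν⁻¹) * toR k n f g₀) * r := by ring
          _ = r := by rw [hone, one_mul]
      rw [this]
    · have hcc : MvPowerSeries.constantCoeff (σ := Fin 2) (R := k) g₀ = 0 := by
        by_contra hne
        exact hu (MvPowerSeries.isUnit_iff_constantCoeff.mpr (isUnit_iff_ne_zero.mpr hne))
      have hmem' : g₀ ∈ Ideal.span {f (jdx-1), f jdx} := by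
        rw [hmax]
        exact constCoeff_zero_mem_mxy k hcc
      obtain ⟨α, β, hab⟩ := Ideal.mem_span_pair.mp hmem'
      refine ⟨-(β * f jdx), α, ?_, ?_, ?_⟩
      · exact ⟨-β, by rw [Finset.prod_range_succ]; ring⟩
      · exact ⟨f (jdx-1) * α, by rw [hFi]; ring⟩
      · refine ⟨0, ?_⟩
        rw [← hab]
        ring
  · -- i < jdx
    refine ⟨-g₀, 0, ?_, ?_, ?_⟩
    · refine ⟨-g₀ * ∏ l ∈ Finset.Ico (i+1) jdx, f l, ?_⟩
      conv_lhs => rw [← Finset.prod_range_mul_prod_Ico f hgt]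
      ring
    · exact ⟨0, by ring⟩
    · exact ⟨0, by ring⟩
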